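/- Let B ∈ ℝ with B < 0, and for each integer k define s_k = (1/3)·( (3+B)/2 + √(27 + B²)·cos( kπ/3 + (1/3)·arctan(3√3 / B) ) ). Then p_B(x) = (x - s₁)(x - s₃)(x - s₅) for all real x; that is, the roots of p_B are s₁, s₃, s₅. -/

import Mathlib

/-- The Ramanujan simple cubic with parameter `B`, evaluated at `x`. -/
noncomputable def pB (B x : ℝ) : ℝ := x ^ 3 - ((3 + B) / 2) * x ^ 2 - ((3 - B) / 2) * x + 1

theorem stmt_4 (B : ℝ) (hB : B < 0) (s : ℤ → ℝ)
    (hs : ∀ k : ℤ, s k = (1 / 3) * ((3 + B) / 2 +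
      Real.sqrt (27 + B ^ 2) *
        Real.cos ((k : ℝ) * Real.pi / 3 + (1 / 3) * Real.arctan (3 * Real.sqrt 3 / B)))) :
    ∀ x : ℝ, pB B x = (x - s 1) * (x - s 3) * (x - s 5) := by
  intro x
  set q : ℝ := Real.sqrt 3 with hqdef
  set r : ℝ := Real.sqrt (27 + B ^ 2) with hrdef
  set θ : ℝ := (1 / 3) * Real.arctan (3 * q / B) with hθdef
  set a : ℝ := Real.cos θ with hadef
  set b : ℝ := Real.sin θ with hbdef
  have hq : q ^ 2 = 3 := Real.sq_sqrt (by norm_num)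
  have hr : r ^ 2 = 27 + B ^ 2 := Real.sq_sqrt (by positivity)
  have ha : a ^ 2 + b ^ 2 = 1 := Real.cos_sq_add_sin_sq θ
  have hr0 : (0:ℝ) < r := Real.sqrt_pos.mpr (by positivity)
  have hB0 : B ≠ 0 := ne_of_lt hB
  have h1 : (1:ℝ) + (3 * q / B) ^ 2 = (27 + B ^ 2) / B ^ 2 := by
    field_simp
    linear_combination 9 * hq
  have hsq : Real.sqrt ((27 + B ^ 2) / B ^ 2) = r / (-B) := by
    rw [Real.sqrt_div (by positivity), Real.sqrt_sq_eq_abs, abs_of_neg hB]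
  have hcos : Real.cos (Real.arctan (3 * q / B)) = -B / r := by
    rw [Real.cos_arctan, h1, hsq, one_div_div]
  have hB3 : r * (4 * a ^ 3 - 3 * a) = -B := by
    have h3 : 3 * θ = Real.arctan (3 * q / B) := by rw [hθdef]; ring
    have hc3 := Real.cos_three_mul θ
    rw [h3, hcos] at hc3
    rw [hadef, ← hc3]
    field_simp
  have e1 : Real.cos ((1:ℝ) * Real.pi / 3 + θ) = a / 2 - q * b / 2 := by
    rw [show (1:ℝ) * Real.pi / 3 + θ = Real.pi / 3 + θ by ring, Real.cos_add,
      Real.cos_pi_div_three, Real.sin_pi_div_three]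
    ring
  have e3 : Real.cos ((3:ℝ) * Real.pi / 3 + θ) = -a := by
    rw [show (3:ℝ) * Real.pi / 3 + θ = Real.pi + θ by ring, Real.cos_add,
      Real.cos_pi, Real.sin_pi]
    ring
  have e5 : Real.cos ((5:ℝ) * Real.pi / 3 + θ) = a / 2 + q * b / 2 := by
    rw [show (5:ℝ) * Real.pi / 3 + θ = (θ - Real.pi / 3) + 2 * Real.pi by ring,
      Real.cos_add_two_pi, Real.cos_sub, Real.cos_pi_div_three, Real.sin_pi_div_three]
    ring
  rw [hs 1, hs 3, hs 5]
  push_cast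
  rw [e1, e3, e5]
  unfold pB
  linear_combination
    ((-1/72) * b ^ 2 * r ^ 2 + (1/108) * a * b ^ 2 * r ^ 3 + (-1/216) * B * b ^ 2 * r ^ 2 +
      (1/36) * x * b ^ 2 * r ^ 2) * hq +
    ((-1/24) * r ^ 2 + (1/36) * a * r ^ 3 + (-1/72) * B * r ^ 2 + (1/12) * x * r ^ 2) * ha +
    ((-1/24) + (1/36) * a * r + (-1/27) * a ^ 3 * r + (-1/72) * B + (1/12) * x) * hr +
    ((-1/4) + (-1/108) * B ^ 2) * hB3
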